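/- Let v and c be integers with 0 < v < c, and let t be an integer with 0 ≤ t ≤ v−1. Then among the integers j with 1 ≤ j ≤ c−1 and tc ≤ vj < (t+1)c, there is exactly one for which fract(v/c) + fract(vj/c) ≥ 1, namely the largest integer j satisfying vj < (t+1)c. -/

import Mathlib

theorem unique_jump_in_band (v c t : ℤ) (hv : 0 < v) (hvc : v < c)
    (ht0 : 0 ≤ t) (htv : t ≤ v - 1) :
    ∃ j : ℤ, IsGreatest {i : ℤ | v * i < (t + 1) * c} j ∧
      (1 ≤ j ∧ j ≤ c - 1 ∧ t * c ≤ v * j ∧ v * j < (t + 1) * c) ∧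
      1 ≤ Int.fract ((v : ℚ) / c) + Int.fract ((v : ℚ) * j / c) ∧
      ∀ j' : ℤ, 1 ≤ j' → j' ≤ c - 1 → t * c ≤ v * j' → v * j' < (t + 1) * c →
        1 ≤ Int.fract ((v : ℚ) / c) + Int.fract ((v : ℚ) * j' / c) → j' = j := by
  have hc : (0:ℤ) < c := lt_trans hv hvc
  have hcq : (0:ℚ) < (c:ℚ) := by exact_mod_cast hc
  set j : ℤ := ((t+1)*c - 1) / v with hjdef
  have hjmax : ∀ i : ℤ, v * i < (t+1)*c ↔ i ≤ j := by
    intro i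
    rw [hjdef, Int.le_ediv_iff_mul_le hv]
    constructor <;> intro h <;> nlinarith
  have hj1 : v * j < (t+1)*c := (hjmax j).mpr le_rfl
  have hj2 : (t+1)*c ≤ v*(j+1) := by
    by_contra h
    push_neg at h
    have := (hjmax (j+1)).mp h
    omega
  have hjge1 : 1 ≤ j := (hjmax 1).mp (by nlinarith)
  have hjlec : j ≤ c - 1 := by nlinarith
  have hband : t*c ≤ v*j := by nlinarith
  have hfv : Int.fract ((v:ℚ)/c) = (v:ℚ)/c := by
    apply Int.fract_eq_self.mpr
    constructor
    · positivity
    · rw [div_lt_one hcq]; exact_mod_cast hvc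
  have key : ∀ i : ℤ, t*c ≤ v*i → v*i < (t+1)*c →
      Int.fract ((v:ℚ)*i/c) = ((v*i - t*c : ℤ):ℚ)/c := by
    intro i h1 h2
    have heq : (v:ℚ)*i/c = (t:ℤ) + ((v*i - t*c : ℤ):ℚ)/c := by
      push_cast
      field_simp
      ring
    rw [heq, Int.fract_intCast_add]
    apply Int.fract_eq_self.mpr
    constructor
    · apply div_nonneg _ hcq.le
      have : (0:ℤ) ≤ v*i - t*c := by omega
      exact_mod_cast this
    · rw [div_lt_one hcq]
      have : v*i - t*c < c := by nlinarith
      exact_mod_cast this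
  refine ⟨j, ⟨hj1, fun i hi => (hjmax i).mp hi⟩, ⟨hjge1, hjlec, hband, hj1⟩, ?_, ?_⟩
  · rw [hfv, key j hband hj1, ← add_div, le_div_iff₀ hcq, one_mul]
    have h6 : c ≤ v + (v*j - t*c) := by nlinarith
    have h7 := (@Int.cast_le ℚ _ _ _).mpr h6
    push_cast at h7 ⊢
    linarith
  · intro j' h1 h2 h3 h4 h5
    by_contra hne
    have hlt : j' < j := lt_of_le_of_ne ((hjmax j').mp h4) hne
    have hsmall : v*j' < (t+1)*c - v := by nlinarith
    rw [hfv, key j' h3 h4, ← add_div, le_div_iff₀ hcq, one_mul] at h5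
    have : (v:ℚ) + ((v*j' - t*c : ℤ):ℚ) < c := by
      have : v + (v*j' - t*c) < c := by nlinarith
      exact_mod_cast this
    linarith
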